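/- arXiv:1008.1409 — 6 statements merged into one kernel-verified Lean document; each statement's English description precedes it below -/
import Mathlib

section
/- For every complex b that is not a root of unity (b^k ≠ 1 for all k ≥ 1), positive integer n, and integer m with 1 ≤ m ≤ n: ∑_{k=m}^{n} C(n,k) C(k,m) (-1)^k / (1 - b^k) multiplied by (1 - b^n), minus the sum ∑_{j=m}^{n-1} [∑_{k=m}^{j} C(j,k) C(k,m) (-1)^k / (1 - b^k)] · C(n,j)(1-b)^{n-j} b^j, equals (-1)^m if n = m and 0 otherwise. (Equivalently, the coefficients β_m^{(n)} = s^{-m} ∑_{k=m}^{n} C(n,k)C(k,m)(-1)^k/(1-b^k) satisfy the recurrence s^m β_M^{(n)} = δ_{n,M}(-1)^M + ∑_{k=M}^{n} s^M β_M^{(k)} C(n,k)(1-b)^{n-k} b^k.) -/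
open Finset

private lemma icc_to_range (f : ℕ → ℂ) (k n : ℕ) (hk : k ≤ n) :
    ∑ j ∈ Icc k n, f j = ∑ i ∈ range (n - k + 1), f (k + i) := by
  rw [← Finset.Ico_add_one_right_eq_Icc, Finset.sum_Ico_eq_sum_range, Nat.sub_add_comm hk]

private lemma my_inner_sum (b : ℂ) (n k : ℕ) (hk : k ≤ n) :
    ∑ j ∈ Icc k n, (n.choose j : ℂ) * (j.choose k) * (1 - b) ^ (n - j) * b ^ j
      = (n.choose k : ℂ) * b ^ k := by
  rw [icc_to_range _ _ _ hk]
  have h : ∀ i ∈ range (n - k + 1),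
      (n.choose (k + i) : ℂ) * ((k + i).choose k) * (1 - b) ^ (n - (k + i)) * b ^ (k + i)
        = (n.choose k : ℂ) * (b ^ i * (1 - b) ^ (n - k - i) * ((n - k).choose i)) * b ^ k := by
    intro i hi
    simp only [mem_range] at hi
    have h2 : n.choose (k + i) * ((k + i).choose k) = n.choose k * ((n - k).choose i) := by
      have := Nat.choose_mul (n := n) (k := k + i) (s := k) (by omega)
      simpa using this
    have h3 : n - (k + i) = n - k - i := by omega
    have h4 : b ^ (k + i) = b ^ k * b ^ i := pow_add b k i
    rw [h3, h4, ← Nat.cast_mul, h2]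
    push_cast
    ring
  rw [Finset.sum_congr rfl h, ← Finset.sum_mul, ← Finset.mul_sum]
  have := add_pow b (1 - b) (n - k)
  simp only [add_sub_cancel, one_pow] at this
  rw [← this]
  ring

private lemma alt_sum (n m : ℕ) (hmn : m ≤ n) :
    ∑ k ∈ Icc m n, (n.choose k : ℂ) * (k.choose m) * (-1) ^ k
      = if n = m then (-1) ^ m else 0 := by
  rw [icc_to_range _ _ _ hmn]
  have h : ∀ i ∈ range (n - m + 1),
      (n.choose (m + i) : ℂ) * ((m + i).choose m) * (-1) ^ (m + i)
        = (n.choose m : ℂ) * (-1) ^ m * ((-1) ^ i * (1:ℂ) ^ (n - m - i) * ((n - m).choose i)) := by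
    intro i hi
    simp only [mem_range] at hi
    have h2 : n.choose (m + i) * ((m + i).choose m) = n.choose m * ((n - m).choose i) := by
      have := Nat.choose_mul (n := n) (k := m + i) (s := m) (by omega)
      simpa using this
    rw [pow_add, ← Nat.cast_mul, h2]
    push_cast
    ring
  rw [Finset.sum_congr rfl h, ← Finset.mul_sum]
  have := add_pow (-1 : ℂ) 1 (n - m)
  rw [neg_add_cancel] at this
  rw [← this]
  rcases eq_or_lt_of_le hmn with h | h
  · subst h; simp
  · have hnm : n - m ≠ 0 := by omega
    rw [zero_pow hnm, if_neg (by omega)]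
    ring

private lemma swap_sum (F : ℕ → ℕ → ℂ) (m n : ℕ) :
    ∑ j ∈ Icc m n, ∑ k ∈ Icc m j, F j k = ∑ k ∈ Icc m n, ∑ j ∈ Icc k n, F j k := by
  calc ∑ j ∈ Icc m n, ∑ k ∈ Icc m j, F j k
      = ∑ j ∈ Icc m n, ∑ k ∈ Icc m n, if k ≤ j then F j k else 0 := by
        refine sum_congr rfl fun j hj => ?_
        simp only [mem_Icc] at hj
        rw [← Finset.sum_filter]
        congr 1
        ext k
        simp only [mem_filter, mem_Icc]
        omega
    _ = ∑ k ∈ Icc m n, ∑ j ∈ Icc m n, if k ≤ j then F j k else 0 := Finset.sum_comm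
    _ = ∑ k ∈ Icc m n, ∑ j ∈ Icc k n, F j k := by
        refine sum_congr rfl fun k hk => ?_
        simp only [mem_Icc] at hk
        rw [← Finset.sum_filter]
        congr 1
        ext j
        simp only [mem_filter, mem_Icc]
        omega

theorem direct_formula_satisfies_recurrence (b : ℂ) (hb : ∀ k : ℕ, 1 ≤ k → b ^ k ≠ 1)
    (n m : ℕ) (hm : 1 ≤ m) (hmn : m ≤ n) :
    (∑ k ∈ Finset.Icc m n,
        (n.choose k : ℂ) * (k.choose m : ℂ) * (-1) ^ k / (1 - b ^ k)) * (1 - b ^ n)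
      - ∑ j ∈ Finset.Icc m (n - 1),
          (∑ k ∈ Finset.Icc m j,
              (j.choose k : ℂ) * (k.choose m : ℂ) * (-1) ^ k / (1 - b ^ k))
            * (n.choose j : ℂ) * (1 - b) ^ (n - j) * b ^ j
      = if n = m then (-1) ^ m else 0 := by
  have hn1 : 1 ≤ n := le_trans hm hmn
  set g : ℕ → ℂ := fun j =>
    (∑ k ∈ Finset.Icc m j, (j.choose k : ℂ) * (k.choose m : ℂ) * (-1) ^ k / (1 - b ^ k))
      * (n.choose j : ℂ) * (1 - b) ^ (n - j) * b ^ j with hg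
  set β : ℂ := ∑ k ∈ Finset.Icc m n,
    (n.choose k : ℂ) * (k.choose m : ℂ) * (-1) ^ k / (1 - b ^ k) with hβ
  -- step A: extend the j-sum to n
  have stepA : ∑ j ∈ Finset.Icc m (n - 1), g j = (∑ j ∈ Finset.Icc m n, g j) - β * b ^ n := by
    have hrw : Finset.Icc m n = Finset.Icc m ((n - 1) + 1) := by congr 1; omega
    have := Finset.sum_Icc_succ_top (a := m) (b := n - 1) (by omega) g
    rw [← hrw] at this
    have hgn : g n = β * b ^ n := by
      simp [hg, hβ, Nat.sub_self]
    rw [this]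
    have hn1' : n - 1 + 1 = n := by omega
    rw [hn1', hgn]
    ring
  -- step B: compute the full j-sum
  have stepB : ∑ j ∈ Finset.Icc m n, g j
      = ∑ k ∈ Finset.Icc m n,
          (k.choose m : ℂ) * (-1) ^ k / (1 - b ^ k) * ((n.choose k : ℂ) * b ^ k) := by
    have hswap := swap_sum (fun j k =>
      (j.choose k : ℂ) * (k.choose m : ℂ) * (-1) ^ k / (1 - b ^ k)
        * ((n.choose j : ℂ) * (1 - b) ^ (n - j) * b ^ j)) m n
    calc ∑ j ∈ Finset.Icc m n, g j
        = ∑ j ∈ Finset.Icc m n, ∑ k ∈ Finset.Icc m j,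
            (j.choose k : ℂ) * (k.choose m : ℂ) * (-1) ^ k / (1 - b ^ k)
              * ((n.choose j : ℂ) * (1 - b) ^ (n - j) * b ^ j) := by
          refine Finset.sum_congr rfl fun j hj => ?_
          simp only [hg]
          rw [Finset.sum_mul, Finset.sum_mul, Finset.sum_mul]
          refine Finset.sum_congr rfl fun k hk => ?_
          ring
      _ = ∑ k ∈ Finset.Icc m n, ∑ j ∈ Finset.Icc k n,
            (j.choose k : ℂ) * (k.choose m : ℂ) * (-1) ^ k / (1 - b ^ k)
              * ((n.choose j : ℂ) * (1 - b) ^ (n - j) * b ^ j) := hswap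
      _ = ∑ k ∈ Finset.Icc m n,
            (k.choose m : ℂ) * (-1) ^ k / (1 - b ^ k) * ((n.choose k : ℂ) * b ^ k) := by
          refine Finset.sum_congr rfl fun k hk => ?_
          simp only [mem_Icc] at hk
          have : ∑ j ∈ Finset.Icc k n,
              (j.choose k : ℂ) * (k.choose m : ℂ) * (-1) ^ k / (1 - b ^ k)
                * ((n.choose j : ℂ) * (1 - b) ^ (n - j) * b ^ j)
              = (k.choose m : ℂ) * (-1) ^ k / (1 - b ^ k)
                * ∑ j ∈ Finset.Icc k n,
                    (n.choose j : ℂ) * (j.choose k) * (1 - b) ^ (n - j) * b ^ j := by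
            rw [Finset.mul_sum]
            refine Finset.sum_congr rfl fun j hj => ?_
            ring
          rw [this, my_inner_sum b n k hk.2]
  rw [stepA, stepB]
  have key : β * (1 - b ^ n)
      - ((∑ k ∈ Finset.Icc m n,
          (k.choose m : ℂ) * (-1) ^ k / (1 - b ^ k) * ((n.choose k : ℂ) * b ^ k)) - β * b ^ n)
      = ∑ k ∈ Finset.Icc m n, (n.choose k : ℂ) * (k.choose m) * (-1) ^ k := by
    have : β * (1 - b ^ n)
        - ((∑ k ∈ Finset.Icc m n,
            (k.choose m : ℂ) * (-1) ^ k / (1 - b ^ k) * ((n.choose k : ℂ) * b ^ k)) - β * b ^ n)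
        = β - ∑ k ∈ Finset.Icc m n,
            (k.choose m : ℂ) * (-1) ^ k / (1 - b ^ k) * ((n.choose k : ℂ) * b ^ k) := by ring
    rw [this, hβ, ← Finset.sum_sub_distrib]
    refine Finset.sum_congr rfl fun k hk => ?_
    simp only [mem_Icc] at hk
    have hne : (1 : ℂ) - b ^ k ≠ 0 := sub_ne_zero.mpr (Ne.symm (hb k (le_trans hm hk.1)))
    field_simp
  rw [key, alt_sum n m hmn]
end

section
/- For 0 < b < 1 and every positive integer m, lim_{n→∞} ∑_{i=0}^{m-1} (1 - (1-b^i)^n) = m; consequently lim_{n→∞} α̃_n(b^m) = m, where α̃_n(x) = ∑_{k=1}^n C(n,k)(-1)^{k+1}(1-x^k)/(1-b^k). -/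
open Filter Topology

lemma binom_id (x : ℝ) (n : ℕ) :
    ∑ k ∈ Finset.Icc 1 n, (n.choose k : ℝ) * (-1) ^ (k + 1) * x ^ k
      = 1 - (1 - x) ^ n := by
  have h : (1 - x) ^ n = ∑ k ∈ Finset.range (n+1), (n.choose k : ℝ) * (-x) ^ k := by
    rw [sub_eq_add_neg, add_comm, add_pow]
    simp [mul_comm]
  have h2 : ∀ k, (n.choose k : ℝ) * (-1) ^ (k + 1) * x ^ k
      = -((n.choose k : ℝ) * (-x) ^ k) := by
    intro k; rw [pow_succ, neg_pow]; ring
  simp only [h2]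
  rw [Finset.sum_neg_distrib]
  rw [show Finset.Icc 1 n = Finset.Ico 1 (n+1) from (Finset.Ico_add_one_right_eq_Icc 1 n).symm]
  rw [Finset.sum_Ico_eq_sub _ (by omega), ← h]
  simp

theorem alpha_limit_at_integer_powers (b : ℝ) (hb0 : 0 < b) (hb1 : b < 1)
    (m : ℕ) (hm : 1 ≤ m) :
    Tendsto (fun n : ℕ => ∑ i ∈ Finset.range m, (1 - (1 - b ^ i) ^ n)) atTop (𝓝 m)
    ∧ Tendsto (fun n : ℕ =>
        ∑ k ∈ Finset.Icc 1 n,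
          (n.choose k : ℝ) * (-1) ^ (k + 1) * ((1 - (b ^ m) ^ k) / (1 - b ^ k)))
        atTop (𝓝 m) := by
  have h1 : Tendsto (fun n : ℕ => ∑ i ∈ Finset.range m, (1 - (1 - b ^ i) ^ n)) atTop
      (𝓝 m) := by
    have : (m : ℝ) = ∑ i ∈ Finset.range m, (1 : ℝ) := by simp
    rw [this]
    apply tendsto_finset_sum
    intro i _
    have h0 : |1 - b ^ i| < 1 := by
      have hp := pow_pos hb0 i
      have hle := pow_le_one₀ hb0.le hb1.le (n := i)
      rw [abs_lt]; constructor <;> nlinarith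
    have := tendsto_pow_atTop_nhds_zero_of_abs_lt_one h0
    have := this.const_sub 1
    simpa using this
  refine ⟨h1, ?_⟩
  have heq : ∀ n : ℕ, ∑ k ∈ Finset.Icc 1 n,
      (n.choose k : ℝ) * (-1) ^ (k + 1) * ((1 - (b ^ m) ^ k) / (1 - b ^ k))
      = ∑ i ∈ Finset.range m, (1 - (1 - b ^ i) ^ n) := by
    intro n
    have step : ∀ k ∈ Finset.Icc 1 n,
        (n.choose k : ℝ) * (-1) ^ (k + 1) * ((1 - (b ^ m) ^ k) / (1 - b ^ k))
        = ∑ i ∈ Finset.range m, (n.choose k : ℝ) * (-1) ^ (k + 1) * (b ^ i) ^ k := by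
      intro k hk
      have hk1 : 1 ≤ k := (Finset.mem_Icc.mp hk).1
      have hbk : b ^ k < 1 := pow_lt_one₀ hb0.le hb1 (by omega)
      have hgeom : ∑ i ∈ Finset.range m, (b ^ k) ^ i = (1 - (b ^ k) ^ m) / (1 - b ^ k) := by
        rw [geom_sum_eq (by linarith)]
        rw [div_eq_div_iff (by linarith) (by linarith)]
        ring
      have : (1 - (b ^ m) ^ k) / (1 - b ^ k) = ∑ i ∈ Finset.range m, (b ^ k) ^ i := by
        rw [hgeom, ← pow_mul, ← pow_mul, Nat.mul_comm]
      rw [this, Finset.mul_sum]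
      apply Finset.sum_congr rfl
      intro i _
      rw [← pow_mul, ← pow_mul, Nat.mul_comm]
    rw [Finset.sum_congr rfl step, Finset.sum_comm]
    apply Finset.sum_congr rfl
    intro i _
    exact binom_id (b ^ i) n
  simp only [heq]
  exact h1
end

section
/- For real κ with Re(κ) > 0 (or simply real κ > 0) and every integer k ≥ 1, |C(κ,k)| ≤ e^{|κ|^2 + Re(κ)} / k^{1 + Re(κ)}, where C(κ,k) is the generalized binomial coefficient. -/
open Finset in
lemma sum_inv_sq_aux (n : ℕ) :
    ∑ i ∈ Finset.Ico 2 (n+2), (1:ℝ)/(i:ℝ)^2 ≤ 1 - 1/(n+1) := by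
  induction n with
  | zero => simp
  | succ n ih =>
    rw [show n+1+2 = (n+2)+1 from rfl, Finset.sum_Ico_succ_top (by omega)]
    have h1 : (0:ℝ) < n+1 := by positivity
    have h2 : (0:ℝ) < n+2 := by positivity
    have : (1:ℝ)/((n:ℝ)+2)^2 ≤ 1/(n+1) - 1/(n+2) := by
      rw [div_sub_div _ _ (ne_of_gt h1) (ne_of_gt h2)]
      rw [div_le_div_iff₀ (by positivity) (by positivity)]
      push_cast
      ring_nf
      nlinarith
    have e : (1:ℝ)/((n:ℝ)+1+1) = 1/((n:ℝ)+2) := by ring_nf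
    push_cast at *
    linarith

lemma log_le_sum_aux (k : ℕ) :
    Real.log k ≤ ∑ i ∈ Finset.Ico 1 k, (1:ℝ)/(i:ℝ) := by
  induction k with
  | zero => simp
  | succ k ih =>
    rcases Nat.eq_zero_or_pos k with rfl | hk
    · simp
    rw [Finset.sum_Ico_succ_top (by omega)]
    have hk' : (0:ℝ) < k := by positivity
    have : Real.log (k+1) - Real.log k ≤ 1/(k:ℝ) := by
      rw [← Real.log_div (by positivity) (ne_of_gt hk')]
      have := Real.log_le_sub_one_of_pos (show (0:ℝ) < ((k:ℝ)+1)/k by positivity)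
      calc Real.log (((k:ℝ)+1)/k) ≤ ((k:ℝ)+1)/k - 1 := this
        _ = 1/(k:ℝ) := by field_simp; ring
    push_cast
    linarith

lemma poly_le_exp {u : ℝ} (hu : 0 ≤ u) : u * (u + 1) ≤ Real.exp u := by
  have h := Real.sum_le_exp_of_nonneg hu 5
  simp [Finset.sum_range_succ, Nat.factorial] at h
  nlinarith [sq_nonneg (u - 1), sq_nonneg (u^2 - 2*u), sq_nonneg u, pow_nonneg hu 3, pow_nonneg hu 4]

lemma cabs_sub_sq (κ : ℂ) (x : ℕ) :
    (‖κ - x‖)^2 = (‖κ‖)^2 - 2*x*κ.re + (x:ℝ)^2 := by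
  rw [Complex.sq_norm, Complex.sq_norm, Complex.normSq_apply, Complex.normSq_apply]
  simp [Complex.sub_re, Complex.sub_im]
  ring

lemma term_bound (κ : ℂ) (hr : 0 < κ.re) {i : ℕ} (hi : 1 ≤ i) :
    ‖κ - i‖ ≤ i * Real.exp ((‖κ‖)^2/(2*(i:ℝ)^2) - κ.re/i) := by
  have hi' : (0:ℝ) < i := by exact_mod_cast hi
  have h1 : (‖κ - i‖)^2 ≤ (i * Real.exp ((‖κ‖)^2/(2*(i:ℝ)^2) - κ.re/i))^2 := by
    rw [cabs_sub_sq, mul_pow, ← Real.exp_nat_mul]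
    have key : ((‖κ‖)^2/(i:ℝ)^2 - 2*κ.re/i) + 1 ≤
        Real.exp ((‖κ‖)^2/(i:ℝ)^2 - 2*κ.re/i) := Real.add_one_le_exp _
    have e2 : ((2:ℕ):ℝ) * ((‖κ‖)^2/(2*(i:ℝ)^2) - κ.re/i)
        = (‖κ‖)^2/(i:ℝ)^2 - 2*κ.re/i := by push_cast; field_simp
    rw [e2]
    have := mul_le_mul_of_nonneg_left key (le_of_lt (by positivity : (0:ℝ) < (i:ℝ)^2))
    calc (‖κ‖)^2 - 2*(i:ℝ)*κ.re + (i:ℝ)^2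
        = (i:ℝ)^2 * (((‖κ‖)^2/(i:ℝ)^2 - 2*κ.re/i) + 1) := by field_simp
      _ ≤ _ := this
  exact (pow_le_pow_iff_left₀ (norm_nonneg _) (by positivity) two_ne_zero).mp h1

noncomputable def gchooseC (κ : ℂ) (k : ℕ) : ℂ :=
  (∏ i ∈ Finset.range k, (κ - i)) / k.factorial

theorem gchoose_bound (κ : ℂ) (hκ : 0 < κ.re) (k : ℕ) (hk : 1 ≤ k) :
    ‖gchooseC κ k‖
      ≤ Real.exp (‖κ‖ ^ 2 + κ.re) / (k : ℝ) ^ (1 + κ.re) := by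
  set t := ‖κ‖ with ht
  set r := κ.re with hr
  have ht0 : 0 ≤ t := norm_nonneg κ
  have hk0 : (0:ℝ) < k := by exact_mod_cast hk
  have habs : ‖gchooseC κ k‖
      = (∏ i ∈ Finset.range k, ‖κ - i‖) / (k.factorial : ℝ) := by
    rw [gchooseC, norm_div, norm_prod, Complex.norm_natCast]
  -- the key scalar bound  t * |κ - 1| ≤ exp (t^2/2)
  have hA : t * ‖κ - (1:ℕ)‖ ≤ Real.exp (t^2/2) := by
    have hsq : (t * ‖κ - (1:ℕ)‖)^2 ≤ (Real.exp (t^2/2))^2 := by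
      rw [mul_pow, cabs_sub_sq, ← ht, ← hr]
      push_cast
      have h1 : t^2 * (t^2 - 2*1*r + (1:ℝ)^2) ≤ t^2*(t^2+1) := by
        push_cast; nlinarith [sq_nonneg t]
      have h2 : t^2*(t^2+1) ≤ Real.exp (t^2) := by
        have := poly_le_exp (sq_nonneg t); nlinarith
      have h3 : (Real.exp (t^2/2))^2 = Real.exp (t^2) := by
        rw [sq, ← Real.exp_add]; ring_nf
      rw [h3]; exact h1.trans h2
    exact (pow_le_pow_iff_left₀ (by positivity) (by positivity) two_ne_zero).mp hsq
  rcases eq_or_lt_of_le hk with hk1 | hk2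
  · -- k = 1
    obtain rfl : k = 1 := hk1.symm
    rw [habs]
    simp only [Nat.cast_one, Real.one_rpow, Nat.factorial_one, Finset.prod_range_one,
      Nat.cast_zero, sub_zero, div_one]
    rw [← ht]
    have h1 : t ≤ t^2 + 1 := by nlinarith [sq_nonneg (t - 1)]
    have h2 : t^2 + 1 ≤ Real.exp (t^2) := by
      have := Real.add_one_le_exp (t^2); linarith
    have h3 : Real.exp (t^2) ≤ Real.exp (t^2 + r) :=
      Real.exp_le_exp.mpr (by linarith)
    linarith
  · -- k ≥ 2
    have hk2' : 2 ≤ k := hk2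
    set P := ∏ i ∈ Finset.Ico 2 k, ‖κ - i‖ with hP
    set Q := ∏ i ∈ Finset.Ico 2 k, (i:ℝ) with hQ
    have hQpos : 0 < Q := Finset.prod_pos (fun i hi => by
      have : 2 ≤ i := (Finset.mem_Ico.mp hi).1; positivity)
    have hprod : ∏ i ∈ Finset.range k, ‖κ - i‖
        = t * ‖κ - (1:ℕ)‖ * P := by
      rw [Finset.prod_range_eq_mul_Ico _ (by omega),
        Finset.prod_eq_prod_Ico_succ_bot (show 1 < k by omega)]
      simp [mul_assoc, hP, ht]
    have hfact : (k.factorial : ℝ) = Q * k := by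
      have : k.factorial = (∏ i ∈ Finset.Ico 2 k, i) * k := by
        rw [← Finset.prod_Ico_id_eq_factorial k,
          Finset.prod_Ico_succ_top (show 1 ≤ k by omega),
          Finset.prod_eq_prod_Ico_succ_bot (show 1 < k by omega), one_mul]
      rw [this]; push_cast; ring
    set S := ∑ i ∈ Finset.Ico 2 k, (t^2/(2*(i:ℝ)^2) - r/i) with hS
    have hPb : P ≤ Q * Real.exp S := by
      calc P ≤ ∏ i ∈ Finset.Ico 2 k, ((i:ℝ) * Real.exp (t^2/(2*(i:ℝ)^2) - r/i)) := by
            apply Finset.prod_le_prod (fun i _ => norm_nonneg _)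
            intro i hi
            have h1i : 1 ≤ i := le_trans (by norm_num) (Finset.mem_Ico.mp hi).1
            exact term_bound κ hκ h1i
        _ = Q * Real.exp S := by rw [Finset.prod_mul_distrib, Real.exp_sum]
    have hsum : S ≤ t^2/2 + r - r * Real.log k := by
      have h1 : ∑ i ∈ Finset.Ico 2 k, t^2/(2*(i:ℝ)^2)
          = (t^2/2) * ∑ i ∈ Finset.Ico 2 k, (1:ℝ)/(i:ℝ)^2 := by
        rw [Finset.mul_sum]
        refine Finset.sum_congr rfl (fun i hi => ?_)
        have : 2 ≤ i := (Finset.mem_Ico.mp hi).1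
        have hi0 : (0:ℝ) < i := by positivity
        field_simp
      have h2 := sum_inv_sq_aux (k-2)
      rw [show k-2+2 = k from by omega] at h2
      have h3 : ∑ i ∈ Finset.Ico 2 k, (1:ℝ)/(i:ℝ)^2 ≤ 1 := by
        have h4 : (0:ℝ) ≤ 1/(((k-2:ℕ):ℝ)+1) := by positivity
        linarith
      have hsq : ∑ i ∈ Finset.Ico 2 k, t^2/(2*(i:ℝ)^2) ≤ t^2/2 := by
        rw [h1]
        nlinarith [sq_nonneg t, Finset.sum_nonneg (fun i (hi : i ∈ Finset.Ico 2 k) =>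
          by positivity : ∀ i ∈ Finset.Ico 2 k, (0:ℝ) ≤ 1/(i:ℝ)^2)]
      have hharm : Real.log k - 1 ≤ ∑ i ∈ Finset.Ico 2 k, (1:ℝ)/(i:ℝ) := by
        have h1 := log_le_sum_aux k
        rw [Finset.sum_eq_sum_Ico_succ_bot (show 1 < k by omega)] at h1
        norm_num at h1
        simp only [one_div]
        linarith
      have hr2 : ∑ i ∈ Finset.Ico 2 k, r/(i:ℝ) = r * ∑ i ∈ Finset.Ico 2 k, (1:ℝ)/(i:ℝ) := by
        rw [Finset.mul_sum]
        exact Finset.sum_congr rfl (fun i _ => by ring)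
      have hmul := mul_le_mul_of_nonneg_left hharm hκ.le
      rw [hS, Finset.sum_sub_distrib, hr2]
      linarith
    have hnum : t * ‖κ - (1:ℕ)‖ * P ≤ Real.exp (t^2/2) * (Q * Real.exp S) :=
      mul_le_mul hA hPb (Finset.prod_nonneg fun i _ => norm_nonneg _) (Real.exp_pos _).le
    calc ‖gchooseC κ k‖
        = (t * ‖κ - (1:ℕ)‖ * P) / (Q * k) := by rw [habs, hprod, hfact]
      _ ≤ (Real.exp (t^2/2) * (Q * Real.exp S)) / (Q * k) := by gcongr
      _ = Real.exp (t^2/2) * Real.exp S / k := by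
            field_simp
      _ = Real.exp (t^2/2 + S) / k := by rw [Real.exp_add]
      _ ≤ Real.exp (t^2 + r - r*Real.log k) / k := by
            gcongr
            linarith
      _ = Real.exp (t^2+r) / (k:ℝ)^(1+r) := by
            rw [Real.rpow_def_of_pos hk0, Real.exp_sub, div_div]
            congr 1
            rw [mul_add, mul_one, Real.exp_add, Real.exp_log hk0,
              mul_comm r (Real.log (k:ℝ))]
            exact mul_comm _ _
end

section
/- For complex κ with Re(κ) > 0, the series ∑_{n=0}^{∞} C(κ,n) z^n converges absolutely for every z on the unit circle |z| = 1, and its sum equals (1+z)^κ. -/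
lemma gchooseC_zero (κ : ℂ) : gchooseC κ 0 = 1 := by simp [gchooseC]

lemma gchooseC_succ (κ : ℂ) (n : ℕ) :
    gchooseC κ (n + 1) = gchooseC κ n * (κ - n) / (n + 1) := by
  have h1 : ((n.factorial : ℂ)) ≠ 0 := by exact_mod_cast Nat.cast_ne_zero.2 n.factorial_ne_zero
  have h2 : ((n : ℂ) + 1) ≠ 0 := Nat.cast_add_one_ne_zero n
  simp only [gchooseC, Finset.prod_range_succ, Nat.factorial_succ]
  push_cast
  rw [div_eq_div_iff (by exact mul_ne_zero h2 h1) h2, div_mul_eq_mul_div,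
    div_mul_eq_mul_div, mul_div_assoc, mul_div_cancel_right₀ _ h1]

lemma gchooseC_ratio_le (κ : ℂ) (hκ : 0 < κ.re) {n : ℕ}
    (hn : (κ.im ^ 2 + κ.re ^ 2) / κ.re + κ.re + 1 ≤ (n : ℝ)) :
    ‖gchooseC κ (n + 1)‖ ≤
      ‖gchooseC κ n‖ * ((n : ℝ) / (n + 1)) ^ (1 + κ.re / 2) := by
  set r := κ.re with hr
  set x : ℝ := (n : ℝ) with hxdef
  have hx0 : 0 < x := by
    have h1 : 0 ≤ (κ.im ^ 2 + r ^ 2) / r := by positivity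
    nlinarith
  have hrx : κ.im ^ 2 + r ^ 2 + r * r + r ≤ r * x := by
    have := mul_le_mul_of_nonneg_left hn hκ.le
    rw [mul_add, mul_add, mul_div_cancel₀ _ hκ.ne'] at this
    nlinarith
  -- |κ - n| ≤ x - r/2
  have hnormSq : Complex.normSq (κ - (n : ℂ)) = (r - x) ^ 2 + κ.im ^ 2 := by
    simp [Complex.normSq_apply, Complex.sub_re, Complex.sub_im]
    ring
  have hxr : 0 ≤ x - r / 2 := by
    have h1 : 0 ≤ (κ.im ^ 2 + r ^ 2) / r := by positivity
    linarith
  have habs : ‖κ - (n : ℂ)‖ ≤ x - r / 2 := by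
    rw [Complex.norm_def, hnormSq]
    rw [show x - r / 2 = Real.sqrt ((x - r / 2) ^ 2) from (Real.sqrt_sq hxr).symm]
    apply Real.sqrt_le_sqrt
    nlinarith [hrx]
  -- Bernoulli
  have hbern : (x + 1 - (1 + r / 2)) / (x + 1) ≤ (x / (x + 1)) ^ (1 + r / 2) := by
    have hu : -1 ≤ -(1 / (x + 1)) := by
      rw [neg_le_neg_iff]
      rw [div_le_one (by linarith)]
      linarith
    have hp : 1 ≤ 1 + r / 2 := by linarith
    have := one_add_mul_self_le_rpow_one_add hu hp
    have he : 1 + -(1 / (x + 1)) = x / (x + 1) := by field_simp; ring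
    have he2 : 1 + (1 + r / 2) * -(1 / (x + 1)) = (x + 1 - (1 + r / 2)) / (x + 1) := by
      field_simp
      ring
    rw [he, he2] at this
    exact this
  -- combine
  have hrec := gchooseC_succ κ n
  have hc : ‖(n : ℂ) + 1‖ = x + 1 := by
    rw [show ((n : ℂ) + 1) = ((n + 1 : ℕ) : ℂ) by push_cast; ring, Complex.norm_natCast]
    push_cast
    ring
  rw [hrec, norm_div, norm_mul, hc]
  have hA : 0 ≤ ‖gchooseC κ n‖ := norm_nonneg _
  calc ‖gchooseC κ n‖ * ‖κ - (n : ℂ)‖ / (x + 1)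
      ≤ ‖gchooseC κ n‖ * (x - r / 2) / (x + 1) := by gcongr
    _ ≤ ‖gchooseC κ n‖ * (x / (x + 1)) ^ (1 + r / 2) := by
        rw [mul_div_assoc]
        gcongr
        calc (x - r / 2) / (x + 1) = (x + 1 - (1 + r / 2)) / (x + 1) := by ring_nf
          _ ≤ (x / (x + 1)) ^ (1 + r / 2) := hbern

lemma gchooseC_bound (κ : ℂ) (hκ : 0 < κ.re) :
    ∃ (n0 : ℕ) (C : ℝ), 0 < n0 ∧ 0 ≤ C ∧
      ∀ n, n0 ≤ n → ‖gchooseC κ n‖ ≤ C * (n : ℝ) ^ (-(1 + κ.re / 2)) := by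
  set s : ℝ := 1 + κ.re / 2 with hsdef
  set n0 : ℕ := ⌈(κ.im ^ 2 + κ.re ^ 2) / κ.re + κ.re + 1⌉₊ + 1 with hn0def
  have hn0pos : 0 < n0 := Nat.succ_pos _
  have hn0big : ∀ n : ℕ, n0 ≤ n → (κ.im ^ 2 + κ.re ^ 2) / κ.re + κ.re + 1 ≤ (n : ℝ) := by
    intro n hn
    calc (κ.im ^ 2 + κ.re ^ 2) / κ.re + κ.re + 1
        ≤ (⌈(κ.im ^ 2 + κ.re ^ 2) / κ.re + κ.re + 1⌉₊ : ℝ) := Nat.le_ceil _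
      _ ≤ (n : ℝ) := by exact_mod_cast Nat.le_of_succ_le hn
  refine ⟨n0, ‖gchooseC κ n0‖ * (n0 : ℝ) ^ s, hn0pos, by positivity, ?_⟩
  intro n hn
  induction n, hn using Nat.le_induction with
  | base =>
    have h0 : (0:ℝ) < (n0 : ℝ) := by exact_mod_cast hn0pos
    rw [mul_assoc, ← Real.rpow_add h0, add_neg_cancel, Real.rpow_zero, mul_one]
  | succ n hn ih =>
    have h1 : (0:ℝ) < (n : ℝ) := by
      have : 0 < n := lt_of_lt_of_le hn0pos hn
      exact_mod_cast this
    have h2 : (0:ℝ) < (n : ℝ) + 1 := by linarith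
    calc ‖gchooseC κ (n + 1)‖
        ≤ ‖gchooseC κ n‖ * ((n : ℝ) / (n + 1)) ^ s :=
          gchooseC_ratio_le κ hκ (hn0big n hn)
      _ ≤ ‖gchooseC κ n0‖ * (n0 : ℝ) ^ s * (n : ℝ) ^ (-s)
            * ((n : ℝ) / (n + 1)) ^ s := by
          gcongr
      _ = ‖gchooseC κ n0‖ * (n0 : ℝ) ^ s * ((n : ℝ) + 1) ^ (-s) := by
          rw [Real.div_rpow h1.le h2.le, Real.rpow_neg h1.le, Real.rpow_neg h2.le]
          have hne : (n : ℝ) ^ s ≠ 0 := (Real.rpow_pos_of_pos h1 s).ne'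
          have hne2 : ((n : ℝ) + 1) ^ s ≠ 0 := (Real.rpow_pos_of_pos h2 s).ne'
          field_simp
          try ring
      _ = ‖gchooseC κ n0‖ * (n0 : ℝ) ^ s * ((n + 1 : ℕ) : ℝ) ^ (-s) := by
          push_cast; ring_nf

lemma gchooseC_summable (κ : ℂ) (hκ : 0 < κ.re) :
    Summable (fun n : ℕ => ‖gchooseC κ n‖) := by
  obtain ⟨n0, C, _, hC, hbound⟩ := gchooseC_bound κ hκ
  have hs : (-(1 + κ.re / 2) : ℝ) < -1 := by linarith
  have h1 : Summable (fun n : ℕ => C * ((n + n0 : ℕ) : ℝ) ^ (-(1 + κ.re / 2))) := by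
    exact ((summable_nat_add_iff n0).2 (Real.summable_nat_rpow.2 hs)).mul_left C
  have h2 : Summable (fun n : ℕ => ‖gchooseC κ (n + n0)‖) :=
    Summable.of_nonneg_of_le (fun n => norm_nonneg _)
      (fun n => hbound (n + n0) (Nat.le_add_left _ _)) h1
  exact (summable_nat_add_iff n0).1 h2

lemma gchooseC_mul_tendsto (κ : ℂ) (hκ : 0 < κ.re) :
    Filter.Tendsto (fun n : ℕ => (n : ℝ) * ‖gchooseC κ n‖)
      Filter.atTop (nhds 0) := by
  obtain ⟨n0, C, hn0, hC, hbound⟩ := gchooseC_bound κ hκ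
  have hlim : Filter.Tendsto (fun n : ℕ => C * (n : ℝ) ^ (-(κ.re / 2)))
      Filter.atTop (nhds 0) := by
    have := (tendsto_rpow_neg_atTop (by linarith : (0:ℝ) < κ.re / 2)).comp
      (tendsto_natCast_atTop_atTop (R := ℝ))
    simpa using this.const_mul C
  apply squeeze_zero_norm' _ hlim
  filter_upwards [Filter.eventually_ge_atTop (max n0 1)] with n hn
  have hn0' : n0 ≤ n := le_trans (le_max_left _ _) hn
  have h1 : (0:ℝ) < (n : ℝ) := by
    have : 1 ≤ n := le_trans (le_max_right _ _) hn
    exact_mod_cast this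
  have : (n : ℝ) * ‖gchooseC κ n‖ ≤ C * (n : ℝ) ^ (-(κ.re / 2)) := by
    calc (n : ℝ) * ‖gchooseC κ n‖
        ≤ (n : ℝ) * (C * (n : ℝ) ^ (-(1 + κ.re / 2))) := by
          have := hbound n hn0'
          gcongr
      _ = C * (n : ℝ) ^ (-(κ.re / 2)) := by
          rw [show (n:ℝ) * (C * (n : ℝ) ^ (-(1 + κ.re / 2)))
              = C * ((n:ℝ) ^ (1:ℝ) * (n : ℝ) ^ (-(1 + κ.re / 2))) by
                rw [Real.rpow_one]; ring,
            ← Real.rpow_add h1]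
          norm_num
  rw [Real.norm_eq_abs, abs_of_nonneg (by positivity)]
  exact this

open Filter Finset Metric in
lemma gchooseC_tsum_eq (κ : ℂ) (hκ : 0 < κ.re) {w : ℂ} (hw : ‖w‖ < 1) :
    ∑' n : ℕ, gchooseC κ n * w ^ n = (1 + w) ^ κ := by
  set a : ℕ → ℂ := gchooseC κ with ha
  set f : ℂ → ℂ := fun u => ∑' n : ℕ, a n * u ^ n with hf
  set S : ℕ → ℂ → ℂ := fun N u => ∑ n ∈ range N, a n * u ^ n with hS
  have hsum := gchooseC_summable κ hκ
  have hTU : TendstoUniformlyOn S f atTop (closedBall (0:ℂ) 1) := by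
    apply tendstoUniformlyOn_tsum_nat hsum
    intro n x hx
    rw [mem_closedBall, dist_zero_right] at hx
    calc ‖a n * x ^ n‖ = ‖a n‖ * ‖x‖ ^ n := by
          simp
      _ ≤ ‖a n‖ * 1 :=
          mul_le_mul_of_nonneg_left (pow_le_one₀ (norm_nonneg _) hx)
            (norm_nonneg _)
      _ = ‖a n‖ := mul_one _
  have hScont : ∀ N, Continuous (S N) := by
    intro N
    exact continuous_finset_sum _ fun n _ => continuous_const.mul (continuous_pow n)
  have hcont : ContinuousOn f (closedBall (0:ℂ) 1) :=
    hTU.continuousOn (Filter.Eventually.of_forall fun N => (hScont N).continuousOn).frequently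
  have hSdiff : ∀ N, DifferentiableOn ℂ (S N) (ball (0:ℂ) 1) := by
    intro N
    apply DifferentiableOn.fun_sum
    intro n _
    exact ((differentiable_pow n).const_mul _).differentiableOn
  have hTLU : TendstoLocallyUniformlyOn S f atTop (ball (0:ℂ) 1) :=
    hTU.tendstoLocallyUniformlyOn.mono ball_subset_closedBall
  have hfd : DifferentiableOn ℂ f (ball (0:ℂ) 1) :=
    hTLU.differentiableOn (Filter.Eventually.of_forall hSdiff) isOpen_ball
  have hdtend : TendstoLocallyUniformlyOn (deriv ∘ S) (deriv f) atTop (ball (0:ℂ) 1) :=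
    hTLU.deriv (Filter.Eventually.of_forall hSdiff) isOpen_ball
  -- ODE: (1 + x) * deriv f x = κ * f x on the ball
  have hODE : ∀ x ∈ ball (0:ℂ) 1, (1 + x) * deriv f x = κ * f x := by
    intro x hx
    have hd1 : Tendsto (fun N => deriv (S N) x) atTop (nhds (deriv f x)) :=
      hdtend.tendsto_at hx
    have hSd : ∀ N, deriv (S N) x = ∑ n ∈ range N, a n * (n * x ^ (n - 1)) := by
      intro N
      have : HasDerivAt (S N) (∑ n ∈ range N, a n * (n * x ^ (n - 1))) x := by
        apply HasDerivAt.fun_sum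
        intro n _
        simpa [mul_comm] using (hasDerivAt_pow n x).const_mul (a n)
      exact this.deriv
    have hkey : ∀ N : ℕ, (1 + x) * (∑ n ∈ range N, a n * (n * x ^ (n - 1)))
        = κ * (∑ n ∈ range N, a n * x ^ n) - (N : ℂ) * a N * x ^ (N - 1) := by
      intro N
      induction N with
      | zero => simp
      | succ N ih =>
        rw [Finset.sum_range_succ (f := fun n => a n * ((n : ℂ) * x ^ (n - 1))), mul_add, ih]
        rw [Finset.sum_range_succ (f := fun n => a n * x ^ n)]
        have hrec : ((N : ℂ) + 1) * a (N + 1) = (κ - N) * a N := by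
          have h2 : ((N : ℂ) + 1) ≠ 0 := Nat.cast_add_one_ne_zero N
          rw [ha, gchooseC_succ, mul_div_assoc', mul_comm ((N : ℂ) + 1) _,
            mul_div_assoc, div_self h2, mul_one]
          ring
        have hpow : (N : ℂ) * x ^ (N - 1) * x = (N : ℂ) * x ^ N := by
          cases N with
          | zero => simp
          | succ M => rw [Nat.succ_sub_one, mul_assoc, ← pow_succ]
        have hN1 : ((N + 1 : ℕ) : ℂ) = (N : ℂ) + 1 := by push_cast; ring
        rw [Nat.succ_sub_one, hN1]
        calc κ * (∑ n ∈ range N, a n * x ^ n) - (N : ℂ) * a N * x ^ (N - 1)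
              + (1 + x) * (a N * ((N : ℂ) * x ^ (N - 1)))
            = κ * (∑ n ∈ range N, a n * x ^ n) + (N : ℂ) * (a N * x ^ N) := by
              have : (1 + x) * (a N * ((N : ℂ) * x ^ (N - 1)))
                  = a N * ((N:ℂ) * x ^ (N-1)) + a N * ((N : ℂ) * x ^ (N - 1) * x) := by
                ring
              rw [this, hpow]
              ring
          _ = κ * ((∑ n ∈ range N, a n * x ^ n) + a N * x ^ N)
              - ((N : ℂ) + 1) * a (N + 1) * x ^ N := by
              rw [hrec]
              ring
    have htail : Tendsto (fun N : ℕ => (N : ℂ) * a N * x ^ (N - 1)) atTop (nhds 0) := by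
      apply squeeze_zero_norm _ (gchooseC_mul_tendsto κ hκ)
      intro N
      have hx1 : ‖x‖ ≤ 1 := by
        rw [mem_ball, dist_zero_right] at hx
        exact le_of_lt hx
      calc ‖(N : ℂ) * a N * x ^ (N - 1)‖
          = (N : ℝ) * ‖a N‖ * ‖x‖ ^ (N - 1) := by
            simp
        _ ≤ (N : ℝ) * ‖a N‖ * 1 := by
            apply mul_le_mul_of_nonneg_left (pow_le_one₀ (norm_nonneg _) hx1)
            positivity
        _ = (N : ℝ) * ‖a N‖ := mul_one _
    have hfx : Tendsto (fun N => S N x) atTop (nhds (f x)) :=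
      hTU.tendsto_at (ball_subset_closedBall hx)
    have hL : Tendsto (fun N => (1 + x) * (∑ n ∈ range N, a n * (n * x ^ (n - 1))))
        atTop (nhds ((1 + x) * deriv f x)) := by
      have h5 : Tendsto (fun N => ∑ n ∈ range N, a n * (n * x ^ (n - 1)))
          atTop (nhds (deriv f x)) := by
        refine hd1.congr fun N => ?_
        rw [hSd]
      exact h5.const_mul _
    have hR : Tendsto (fun N : ℕ => κ * (∑ n ∈ range N, a n * x ^ n)
          - (N : ℂ) * a N * x ^ (N - 1))
        atTop (nhds (κ * f x - 0)) := (hfx.const_mul κ).sub htail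
    rw [sub_zero] at hR
    exact tendsto_nhds_unique (hL.congr fun N => (hkey N)) hR
  -- Derivative of f * (1 + ·) ^ (-κ) vanishes
  set g : ℂ → ℂ := fun u => f u * (1 + u) ^ (-κ) with hg
  have hg0 : ∀ x ∈ ball (0:ℂ) 1, HasDerivAt g 0 x := by
    intro x hx
    have hxlt : ‖x‖ < 1 := by rwa [mem_ball, dist_zero_right] at hx
    have hre : 0 < (1 + x).re := by
      have := Complex.abs_re_le_norm x
      have h1 : |x.re| < 1 := lt_of_le_of_lt this hxlt
      rw [Complex.add_re, Complex.one_re]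
      cases abs_lt.1 h1
      linarith
    have hslit : (1 + x) ∈ Complex.slitPlane := Or.inl hre
    have hne : (1 + x) ≠ 0 := by
      intro h
      rw [h] at hre
      simp at hre
    have hf' : HasDerivAt f (deriv f x) x :=
      ((hfd x hx).differentiableAt (isOpen_ball.mem_nhds hx)).hasDerivAt
    have hc : HasDerivAt (fun u : ℂ => (1 + u) ^ (-κ)) (-κ * (1 + x) ^ (-κ - 1) * 1) x :=
      HasDerivAt.cpow_const ((hasDerivAt_id x).const_add 1) hslit
    have hmul := hf'.mul hc
    have hval : deriv f x * (1 + x) ^ (-κ) + f x * (-κ * (1 + x) ^ (-κ - 1) * 1) = 0 := by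
      have he : (1 + x) ^ (-κ) = (1 + x) ^ (-κ - 1) * (1 + x) := by
        conv_lhs => rw [show (-κ) = (-κ - 1) + 1 by ring]
        rw [Complex.cpow_add _ _ hne, Complex.cpow_one]
      rw [he, mul_one]
      have : deriv f x * ((1 + x) ^ (-κ - 1) * (1 + x)) + f x * (-κ * (1 + x) ^ (-κ - 1))
          = (1 + x) ^ (-κ - 1) * ((1 + x) * deriv f x - κ * f x) := by ring
      rw [this, hODE x hx, sub_self, mul_zero]
    rw [hval] at hmul
    exact hmul
  have hgconst : g w = g 0 := by
    have hconv : Convex ℝ (ball (0:ℂ) 1) := convex_ball _ _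
    have hgd : DifferentiableOn ℂ g (ball (0:ℂ) 1) := fun x hx =>
      (hg0 x hx).differentiableAt.differentiableWithinAt
    have hfz : ∀ x ∈ ball (0:ℂ) 1, fderivWithin ℂ g (ball (0:ℂ) 1) x = 0 := by
      intro x hx
      have h1 : HasFDerivAt g (0 : ℂ →L[ℂ] ℂ) x := by
        have h2 : (ContinuousLinearMap.smulRight (1 : ℂ →L[ℂ] ℂ) (0 : ℂ)) = 0 := by
          ext
          simp
        rw [← h2]
        exact (hg0 x hx).hasFDerivAt
      rw [fderivWithin_of_isOpen isOpen_ball hx]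
      exact h1.fderiv
    have hw' : w ∈ ball (0:ℂ) 1 := by rwa [mem_ball, dist_zero_right]
    have h0 : (0:ℂ) ∈ ball (0:ℂ) 1 := by simp
    exact hconv.is_const_of_fderivWithin_eq_zero hgd hfz hw' h0
  have hf0 : f 0 = 1 := by
    have h1 : f 0 = ∑' n : ℕ, a n * (0 : ℂ) ^ n := rfl
    rw [h1, tsum_eq_single 0 (fun n hn => by simp [zero_pow hn])]
    simp [ha, gchooseC_zero]
  have hg0' : g 0 = 1 := by
    rw [hg]
    simp [hf0, Complex.one_cpow]
  rw [hg0'] at hgconst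
  -- conclude
  have hrew : 0 < (1 + w).re := by
    have := Complex.abs_re_le_norm w
    have h1 : |w.re| < 1 := lt_of_le_of_lt this hw
    rw [Complex.add_re, Complex.one_re]
    cases abs_lt.1 h1
    linarith
  have hnew : (1 + w) ≠ 0 := by
    intro h
    rw [h] at hrew
    simp at hrew
  have hpne : (1 + w) ^ κ ≠ 0 := by
    rw [Ne, Complex.cpow_eq_zero_iff]
    tauto
  have : f w * ((1 + w) ^ κ)⁻¹ = 1 := by
    rw [← Complex.cpow_neg]
    exact hgconst
  rw [mul_inv_eq_one₀ hpne] at this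
  exact this

open Filter Finset Metric in
theorem binomial_series_unit_circle (κ : ℂ) (hκ : 0 < κ.re) (z : ℂ)
    (hz : ‖z‖ = 1) :
    Summable (fun n : ℕ => ‖gchooseC κ n * z ^ n‖)
    ∧ ∑' n : ℕ, gchooseC κ n * z ^ n = (1 + z) ^ κ := by
  have hsum := gchooseC_summable κ hκ
  constructor
  · exact hsum.congr fun n => by simp [norm_mul, norm_pow, hz]
  · set a : ℕ → ℂ := gchooseC κ with ha
    set f : ℂ → ℂ := fun u => ∑' n : ℕ, a n * u ^ n with hf
    -- continuity of f on the closed ball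
    have hTU : TendstoUniformlyOn (fun N u => ∑ n ∈ range N, a n * u ^ n) f atTop
        (closedBall (0:ℂ) 1) := by
      apply tendstoUniformlyOn_tsum_nat hsum
      intro n x hx
      rw [mem_closedBall, dist_zero_right] at hx
      calc ‖a n * x ^ n‖ = ‖a n‖ * ‖x‖ ^ n := by
            simp
        _ ≤ ‖a n‖ * 1 :=
            mul_le_mul_of_nonneg_left (pow_le_one₀ (norm_nonneg _) hx)
              (norm_nonneg _)
        _ = ‖a n‖ := mul_one _
    have hcont : ContinuousOn f (closedBall (0:ℂ) 1) :=
      hTU.continuousOn (Filter.Eventually.of_forall fun N =>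
        (continuous_finset_sum _ fun n _ => continuous_const.mul (continuous_pow n)).continuousOn).frequently
    -- approximating sequence inside the ball
    set w : ℕ → ℂ := fun k => (((1 : ℝ) - 1 / (k + 1) : ℝ) : ℂ) * z with hwdef
    have htk : ∀ k : ℕ, 0 ≤ (1 : ℝ) - 1 / (k + 1) ∧ (1 : ℝ) - 1 / (k + 1) < 1 := by
      intro k
      have h1 : (0:ℝ) < (k:ℝ) + 1 := by positivity
      constructor
      · have : 1 / ((k:ℝ) + 1) ≤ 1 := by
          rw [div_le_one h1]; linarith
        linarith
      · have : 0 < 1 / ((k:ℝ) + 1) := by positivity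
        linarith
    have hmem : ∀ k, w k ∈ ball (0:ℂ) 1 := by
      intro k
      rw [mem_ball, dist_zero_right, hwdef]
      simp only [norm_mul, Complex.norm_real, Real.norm_eq_abs, hz, mul_one]
      rw [abs_of_nonneg (htk k).1]
      exact (htk k).2
    have habsw : ∀ k, ‖w k‖ < 1 := by
      intro k
      have := hmem k
      rwa [mem_ball, dist_zero_right] at this
    have htend : Tendsto w atTop (nhds z) := by
      have h1 : Tendsto (fun k : ℕ => (1:ℝ) - 1 / (k + 1)) atTop (nhds 1) := by
        have := tendsto_one_div_add_atTop_nhds_zero_nat (𝕜 := ℝ)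
        simpa using (tendsto_const_nhds (x := (1:ℝ))).sub this
      have h2 : Tendsto (fun k : ℕ => (((1:ℝ) - 1 / (k + 1) : ℝ) : ℂ)) atTop
          (nhds (((1:ℝ) : ℂ))) := (Complex.continuous_ofReal.tendsto _).comp h1
      have h3 := h2.mul (tendsto_const_nhds (x := z))
      have h4 : ((1:ℝ) : ℂ) * z = z := by simp
      rw [h4] at h3
      exact h3
    have hzmem : z ∈ closedBall (0:ℂ) 1 := by
      rw [mem_closedBall, dist_zero_right, hz]
    have htendw : Tendsto w atTop (nhdsWithin z (closedBall (0:ℂ) 1)) :=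
      tendsto_nhdsWithin_iff.2 ⟨htend,
        Filter.Eventually.of_forall fun k => ball_subset_closedBall (hmem k)⟩
    have hfz : Tendsto (fun k => f (w k)) atTop (nhds (f z)) :=
      (hcont z hzmem).tendsto.comp htendw
    -- continuity of (1 + ·) ^ κ at z
    have hGz : ContinuousAt (fun u : ℂ => (1 + u) ^ κ) z := by
      by_cases hz1 : z = -1
      · have hc1 : ContinuousAt (fun u : ℂ => ((1 + u, κ) : ℂ × ℂ)) z :=
          ((continuous_const.add continuous_id).prodMk continuous_const).continuousAt
        have hc2 : ContinuousAt (fun p : ℂ × ℂ => p.1 ^ p.2) (1 + z, κ) := by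
          rw [hz1]
          simpa using Complex.continuousAt_cpow_zero_of_re_pos hκ
        exact ContinuousAt.comp (f := fun u : ℂ => ((1 + u, κ) : ℂ × ℂ)) hc2 hc1
      · have hre : 0 < (1 + z).re := by
          have h1 : |z.re| ≤ 1 := by
            have := Complex.abs_re_le_norm z
            rwa [hz] at this
          have h2 : -1 ≤ z.re := by
            have := abs_le.1 h1
            exact this.1
          rcases lt_or_eq_of_le h2 with h3 | h3
          · rw [Complex.add_re, Complex.one_re]; linarith
          · exfalso
            apply hz1
            have hnsq : Complex.normSq z = 1 := by
              rw [← Complex.sq_norm, hz]; norm_num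
            have him : z.im = 0 := by
              rw [Complex.normSq_apply, ← h3] at hnsq
              nlinarith [sq_nonneg z.im]
            apply Complex.ext
            · rw [← h3]; simp
            · rw [him]; simp
        have hc1 : ContinuousAt (fun u : ℂ => (1 + u)) z :=
          (continuous_const.add continuous_id).continuousAt
        exact (continuousAt_cpow_const (Or.inl hre)).comp hc1
    have hGtend : Tendsto (fun k => (1 + w k) ^ κ) atTop (nhds ((1 + z) ^ κ)) :=
      hGz.tendsto.comp htend
    have heq : ∀ k, f (w k) = (1 + w k) ^ κ := fun k => gchooseC_tsum_eq κ hκ (habsw k)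
    have hfz' : Tendsto (fun k => (1 + w k) ^ κ) atTop (nhds (f z)) :=
      hfz.congr fun k => heq k
    exact tendsto_nhds_unique hfz' hGtend
end

section
/- For 0 < b < 1, define R_j^{(n)} = ∑_{i=0}^{j} C(j,i) (-1)^{j-i} (1-b^i)^n for integers j, n ≥ 1. Then R_j^{(n)} = (-1)^{j-n} ∑_{k=0}^{n} C(n,k) (-1)^{n-k} (1-b^k)^j, i.e., |R_j^{(n)}| = |R_n^{(j)}|. -/
open Finset

theorem R_symmetry (b : ℝ) (hb0 : 0 < b) (hb1 : b < 1) (j n : ℕ)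
    (hj : 1 ≤ j) (hn : 1 ≤ n) :
    ∑ i ∈ Finset.range (j + 1),
        (j.choose i : ℝ) * (-1) ^ (j - i) * (1 - b ^ i) ^ n
      = (-1 : ℝ) ^ ((j : ℤ) - (n : ℤ)) *
          ∑ k ∈ Finset.range (n + 1),
            (n.choose k : ℝ) * (-1) ^ (n - k) * (1 - b ^ k) ^ j := by
  have key : ∀ p q : ℕ,
      ∑ i ∈ range (p + 1), (p.choose i : ℝ) * (-1) ^ (p - i) * (1 - b ^ i) ^ q
        = (-1) ^ p * ∑ i ∈ range (p + 1), ∑ k ∈ range (q + 1),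
            (p.choose i : ℝ) * (q.choose k : ℝ) * (-1) ^ (i + k) * b ^ (i * k) := by
    intro p q
    rw [Finset.mul_sum]
    refine Finset.sum_congr rfl fun i hi => ?_
    have hip : i ≤ p := Nat.lt_succ_iff.mp (Finset.mem_range.mp hi)
    have hexp : (1 - b ^ i) ^ q
        = ∑ k ∈ range (q + 1), (q.choose k : ℝ) * (-1) ^ k * b ^ (i * k) := by
      rw [sub_eq_add_neg, add_comm, add_pow]
      refine Finset.sum_congr rfl fun k hk => ?_
      rw [neg_pow, ← pow_mul]
      ring
    rw [hexp, Finset.mul_sum, Finset.mul_sum]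
    refine Finset.sum_congr rfl fun k hk => ?_
    have hsign : (-1 : ℝ) ^ (p - i) = (-1) ^ p * (-1) ^ i := by
      rw [← pow_add]
      rw [show p + i = (p - i) + 2 * i by omega, pow_add]
      simp [pow_mul]
    rw [hsign, pow_add]
    ring
  rw [key j n, key n j]
  have hT : ∑ i ∈ range (j + 1), ∑ k ∈ range (n + 1),
        (j.choose i : ℝ) * (n.choose k : ℝ) * (-1) ^ (i + k) * b ^ (i * k)
      = ∑ k ∈ range (n + 1), ∑ i ∈ range (j + 1),
        (n.choose k : ℝ) * (j.choose i : ℝ) * (-1) ^ (k + i) * b ^ (k * i) := by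
    rw [Finset.sum_comm]
    refine Finset.sum_congr rfl fun k _ => Finset.sum_congr rfl fun i _ => ?_
    rw [add_comm k i, mul_comm k i]; ring
  rw [hT, ← mul_assoc]
  congr 1
  have h1 : (-1 : ℝ) ^ ((j : ℤ) - (n : ℤ))
      = (-1 : ℝ) ^ (j : ℤ) * ((-1 : ℝ) ^ (n : ℤ))⁻¹ := by
    rw [zpow_sub₀ (by norm_num), div_eq_mul_inv]
  rw [h1, zpow_natCast, zpow_natCast, mul_assoc, ← inv_pow, inv_neg, inv_one,
    ← pow_add, show n + n = 2 * n by ring, pow_mul]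
  simp
end

section
/- For 0 < b < 1 and 0 < x < 1, with α̃_n(y) = ∑_{k=1}^{n} C(n,k)(-1)^{k+1}(1-y^k)/(1-b^k), the identity α̃_n(b^x) = x - ∑_{j=1}^{∞} C(x, j+1) R_j^{(n)} holds, where R_j^{(n)} = ∑_{i=0}^{j} C(j,i)(-1)^{j-i}(1-b^i)^n and C(x,j+1) is the generalized binomial coefficient. -/
set_option maxRecDepth 8000

open Finset

noncomputable def gchoose (x : ℝ) (j : ℕ) : ℝ :=
  (∏ i ∈ Finset.range j, (x - i)) / j.factorial

lemma gchoose_zero (x : ℝ) : gchoose x 0 = 1 := by simp [gchoose]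

lemma gchoose_one (x : ℝ) : gchoose x 1 = x := by simp [gchoose]

lemma gchoose_succ (x : ℝ) (j : ℕ) :
    ((j : ℝ) + 1) * gchoose x (j + 1) = (x - j) * gchoose x j := by
  have hfac : (j.factorial : ℝ) ≠ 0 := by positivity
  simp only [gchoose, Finset.prod_range_succ, Nat.factorial_succ, Nat.cast_mul,
    Nat.cast_add, Nat.cast_one]
  field_simp

lemma gchoose_succ' (x : ℝ) (j : ℕ) :
    gchoose x (j + 1) = (x - j) * gchoose x j / ((j : ℝ) + 1) := by
  have h : ((j : ℝ) + 1) ≠ 0 := by positivity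
  field_simp
  rw [mul_comm]
  exact gchoose_succ x j

lemma abs_xsub_gchoose_le {x : ℝ} (hx0 : 0 < x) (hx1 : x < 1) (N : ℕ) :
    |(x - N) * gchoose x N| ≤ x := by
  induction N with
  | zero => simp [gchoose, abs_of_pos hx0]
  | succ N ih =>
      rw [gchoose_succ' x N]
      have hN1 : (0:ℝ) < (N : ℝ) + 1 := by positivity
      have h1 : |(x - (N+1:ℕ)) * ((x - N) * gchoose x N / ((N:ℝ) + 1))|
          = (|x - ((N:ℝ)+1)| / ((N:ℝ)+1)) * |(x - N) * gchoose x N| := by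
        rw [abs_mul, abs_div, abs_of_pos hN1]
        push_cast
        ring
      rw [h1]
      have h2 : |x - ((N:ℝ)+1)| ≤ (N:ℝ) + 1 := by
        rw [abs_le]; constructor <;> nlinarith
      have h3 : |x - ((N:ℝ)+1)| / ((N:ℝ)+1) ≤ 1 := by
        rw [div_le_one hN1]; exact h2
      calc (|x - ((N:ℝ)+1)| / ((N:ℝ)+1)) * |(x - N) * gchoose x N|
          ≤ 1 * |(x - N) * gchoose x N| := by
            apply mul_le_mul_of_nonneg_right h3 (abs_nonneg _)
        _ ≤ x := by rw [one_mul]; exact ih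

lemma abs_gchoose_le_one {x : ℝ} (hx0 : 0 < x) (hx1 : x < 1) (j : ℕ) :
    |gchoose x j| ≤ 1 := by
  cases j with
  | zero => simp [gchoose]
  | succ N =>
      rw [gchoose_succ' x N, abs_div]
      have hN1 : (0:ℝ) < (N : ℝ) + 1 := by positivity
      rw [abs_of_pos hN1, div_le_one hN1]
      calc |(x - N) * gchoose x N| ≤ x := abs_xsub_gchoose_le hx0 hx1 N
        _ ≤ (N:ℝ) + 1 := by nlinarith [Nat.cast_nonneg (α := ℝ) N]

lemma summable_gchoose {x s : ℝ} (hx0 : 0 < x) (hx1 : x < 1)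
    (hs0 : 0 ≤ s) (hs1 : s < 1) :
    Summable (fun j : ℕ => gchoose x j * (-s) ^ j) := by
  apply Summable.of_norm_bounded (g := fun j : ℕ => s ^ j)
    (summable_geometric_of_lt_one hs0 hs1)
  intro j
  rw [Real.norm_eq_abs, abs_mul, abs_pow, abs_neg, abs_of_nonneg hs0]
  calc |gchoose x j| * s ^ j ≤ 1 * s ^ j := by
        apply mul_le_mul_of_nonneg_right (abs_gchoose_le_one hx0 hx1 j) (by positivity)
    _ = s ^ j := one_mul _

lemma telescope_claim (x u : ℝ) (j : ℕ) :
    (1 - u) * (gchoose x j * ((j : ℝ) * (-u) ^ (j - 1) * (-1)))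
      + x * (gchoose x j * (-u) ^ j)
    = ((-1:ℝ) ^ j * (j : ℝ) * gchoose x j * u ^ (j - 1))
      - ((-1:ℝ) ^ (j + 1) * ((j + 1 : ℕ) : ℝ) * gchoose x (j + 1) * u ^ ((j + 1) - 1)) := by
  cases j with
  | zero => simp [gchoose_zero, gchoose_one]
  | succ m =>
      rw [gchoose_succ' x (m + 1)]
      have e1 : (-u : ℝ) ^ (m + 1) = (-1) ^ (m + 1) * u ^ (m + 1) := by rw [neg_pow]
      have e2 : (-u : ℝ) ^ (m + 1 - 1) = (-1) ^ m * u ^ m := by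
        rw [show (m + 1 - 1 : ℕ) = m from rfl, neg_pow]
      rw [e1, e2, show (m + 1 - 1 : ℕ) = m from rfl, show (m + 1 + 1 - 1 : ℕ) = m + 1 from rfl]
      have hm2 : ((m : ℝ) + 1 + 1) ≠ 0 := by positivity
      push_cast
      field_simp
      ring

lemma key_identity (x u : ℝ) (N : ℕ) :
    (1 - u) * (∑ j ∈ range (N + 1), gchoose x j * ((j : ℝ) * (-u) ^ (j - 1) * (-1)))
      + x * (∑ j ∈ range (N + 1), gchoose x j * (-u) ^ j)
    = (-1:ℝ) ^ N * ((x - N) * gchoose x N) * u ^ N := by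
  have hsum2 : (1 - u) * (∑ j ∈ range (N + 1), gchoose x j * ((j : ℝ) * (-u) ^ (j - 1) * (-1)))
      + x * (∑ j ∈ range (N + 1), gchoose x j * (-u) ^ j)
      = ∑ j ∈ range (N + 1),
          (((-1:ℝ) ^ j * (j : ℝ) * gchoose x j * u ^ (j - 1))
            - ((-1:ℝ) ^ (j + 1) * ((j + 1 : ℕ) : ℝ) * gchoose x (j + 1) * u ^ ((j + 1) - 1))) := by
    rw [Finset.mul_sum, Finset.mul_sum, ← Finset.sum_add_distrib]
    exact Finset.sum_congr rfl fun j _ => telescope_claim x u j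
  rw [hsum2,
    Finset.sum_range_sub' (fun j => (-1:ℝ) ^ j * (j : ℝ) * gchoose x j * u ^ (j - 1)) (N + 1)]
  have hw0 : ((-1:ℝ) ^ 0 * ((0:ℕ) : ℝ) * gchoose x 0 * u ^ (0 - 1)) = 0 := by simp
  have hwN : ((-1:ℝ) ^ (N + 1) * (((N + 1 : ℕ)) : ℝ) * gchoose x (N + 1) * u ^ ((N + 1) - 1))
      = -((-1:ℝ) ^ N * ((x - N) * gchoose x N) * u ^ N) := by
    rw [gchoose_succ' x N, show (N + 1 - 1 : ℕ) = N from rfl, pow_succ]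
    have hN1 : ((N : ℝ) + 1) ≠ 0 := by positivity
    push_cast
    field_simp
  rw [hw0, hwN]
  ring

lemma binom_partial_bound {x s : ℝ} (hx0 : 0 < x) (hx1 : x < 1)
    (hs0 : 0 < s) (hs1 : s < 1) (N : ℕ) :
    |∑ j ∈ range (N + 1), gchoose x j * (-s) ^ j - (1 - s) ^ x|
      ≤ (x * (1 - s)⁻¹) * s ^ (N + 1) := by
  have h1s : (0:ℝ) < 1 - s := by linarith
  have hgd : ∀ u ∈ Set.Icc (0:ℝ) s,
      HasDerivAt (fun u : ℝ => (∑ j ∈ range (N + 1), gchoose x j * (-u) ^ j) * (1 - u) ^ (-x))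
        ((-1:ℝ) ^ N * ((x - N) * gchoose x N) * u ^ N * (1 - u) ^ (-x - 1)) u := by
    intro u hu
    have hu1 : (0:ℝ) < 1 - u := by
      have := hu.2; linarith
    have hPd : HasDerivAt (fun u : ℝ => ∑ j ∈ range (N + 1), gchoose x j * (-u) ^ j)
        (∑ j ∈ range (N + 1), gchoose x j * ((j : ℝ) * (-u) ^ (j - 1) * (-1))) u := by
      apply HasDerivAt.fun_sum
      intro j _
      apply HasDerivAt.const_mul
      have h := (hasDerivAt_pow j (-u)).comp u (hasDerivAt_neg u)
      simpa [Function.comp_def] using h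
    have hr : HasDerivAt (fun u : ℝ => (1 - u) ^ (-x)) (x * (1 - u) ^ (-x - 1)) u := by
      have h1 : HasDerivAt (fun u : ℝ => 1 - u) (-1) u := (hasDerivAt_id u).const_sub 1
      have h2 : HasDerivAt (fun y : ℝ => y ^ (-x)) (-x * (1 - u) ^ (-x - 1)) (1 - u) :=
        Real.hasDerivAt_rpow_const (Or.inl (ne_of_gt hu1))
      have h3 := h2.comp u h1
      refine h3.congr_deriv ?_
      ring
    have hD := hPd.mul hr
    refine hD.congr_deriv (Eq.symm ?_)
    have hsplit : (1 - u) ^ (-x) = (1 - u) ^ (-x - 1) * (1 - u) := by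
      have h7 := Real.rpow_add hu1 (-x - 1) 1
      rw [Real.rpow_one] at h7
      rw [← h7]
      norm_num
    calc (-1:ℝ) ^ N * ((x - N) * gchoose x N) * u ^ N * (1 - u) ^ (-x - 1)
        = ((1 - u) * (∑ j ∈ range (N + 1), gchoose x j * ((j : ℝ) * (-u) ^ (j - 1) * (-1)))
            + x * (∑ j ∈ range (N + 1), gchoose x j * (-u) ^ j)) * (1 - u) ^ (-x - 1) := by
          rw [key_identity]
      _ = (∑ j ∈ range (N + 1), gchoose x j * ((j : ℝ) * (-u) ^ (j - 1) * (-1)))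
            * (1 - u) ^ (-x)
          + (∑ j ∈ range (N + 1), gchoose x j * (-u) ^ j) * (x * (1 - u) ^ (-x - 1)) := by
          rw [hsplit]; ring
  have hbound : ∀ u ∈ Set.Icc (0:ℝ) s,
      ‖(-1:ℝ) ^ N * ((x - N) * gchoose x N) * u ^ N * (1 - u) ^ (-x - 1)‖
        ≤ x * s ^ N * (1 - s) ^ (-x - 1) := by
    intro u hu
    have hu0 := hu.1
    have hus := hu.2
    have hu1 : (0:ℝ) < 1 - u := by linarith
    rw [Real.norm_eq_abs, abs_mul, abs_mul, abs_mul, abs_pow, abs_neg, abs_one, one_pow,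
      one_mul, abs_pow, abs_of_nonneg hu0, abs_of_pos (Real.rpow_pos_of_pos hu1 _)]
    have b1 : |(x - N) * gchoose x N| ≤ x := abs_xsub_gchoose_le hx0 hx1 N
    have b2 : u ^ N ≤ s ^ N := pow_le_pow_left₀ hu0 hus N
    have b3 : (1 - u) ^ (-x - 1) ≤ (1 - s) ^ (-x - 1) :=
      Real.rpow_le_rpow_of_nonpos h1s (by linarith) (by linarith)
    have h4 : (0:ℝ) ≤ (1 - u) ^ (-x - 1) := le_of_lt (Real.rpow_pos_of_pos hu1 _)
    have h5 : |(x - N) * gchoose x N| * u ^ N ≤ x * s ^ N :=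
      mul_le_mul b1 b2 (by positivity) (le_of_lt hx0)
    exact mul_le_mul h5 b3 h4 (by positivity)
  have hconv : Convex ℝ (Set.Icc (0:ℝ) s) := convex_Icc 0 s
  have hmvt := hconv.norm_image_sub_le_of_norm_hasDerivWithin_le
    (fun u hu => (hgd u hu).hasDerivWithinAt) hbound
    (Set.left_mem_Icc.mpr (le_of_lt hs0)) (Set.right_mem_Icc.mpr (le_of_lt hs0))
  have hg0 : (∑ j ∈ range (N + 1), gchoose x j * (-(0:ℝ)) ^ j) * (1 - (0:ℝ)) ^ (-x) = 1 := by
    have hP0 : (∑ j ∈ range (N + 1), gchoose x j * (-(0:ℝ)) ^ j) = 1 := by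
      rw [Finset.sum_eq_single 0]
      · simp [gchoose_zero]
      · intro j _ hj
        rw [neg_zero, zero_pow hj, mul_zero]
      · simp
    rw [hP0, sub_zero, Real.one_rpow, one_mul]
  rw [hg0] at hmvt
  have hfin : |(∑ j ∈ range (N + 1), gchoose x j * (-s) ^ j) * (1 - s) ^ (-x) - 1|
      ≤ (x * s ^ N * (1 - s) ^ (-x - 1)) * s := by
    simpa [abs_of_pos hs0] using hmvt
  have hgs : ((∑ j ∈ range (N + 1), gchoose x j * (-s) ^ j) * (1 - s) ^ (-x)) * (1 - s) ^ x
      = ∑ j ∈ range (N + 1), gchoose x j * (-s) ^ j := by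
    rw [mul_assoc, ← Real.rpow_add h1s]
    norm_num
  have hxpos : (0:ℝ) < (1 - s) ^ x := Real.rpow_pos_of_pos h1s x
  have habs : |∑ j ∈ range (N + 1), gchoose x j * (-s) ^ j - (1 - s) ^ x|
      = |(∑ j ∈ range (N + 1), gchoose x j * (-s) ^ j) * (1 - s) ^ (-x) - 1| * (1 - s) ^ x := by
    have h5 : ∑ j ∈ range (N + 1), gchoose x j * (-s) ^ j - (1 - s) ^ x
        = ((∑ j ∈ range (N + 1), gchoose x j * (-s) ^ j) * (1 - s) ^ (-x) - 1) * (1 - s) ^ x := by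
      rw [sub_mul, hgs, one_mul]
    rw [h5, abs_mul, abs_of_pos hxpos]
  have hCc : (x * s ^ N * (1 - s) ^ (-x - 1)) * s * (1 - s) ^ x
      = (x * (1 - s)⁻¹) * s ^ (N + 1) := by
    have h6 : (1 - s) ^ (-x - 1) * (1 - s) ^ x = (1 - s)⁻¹ := by
      rw [← Real.rpow_add h1s]
      rw [show -x - 1 + x = -1 by ring, Real.rpow_neg_one]
    calc x * s ^ N * (1 - s) ^ (-x - 1) * s * (1 - s) ^ x
        = x * (s ^ N * s) * ((1 - s) ^ (-x - 1) * (1 - s) ^ x) := by ring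
      _ = (x * (1 - s)⁻¹) * s ^ (N + 1) := by rw [h6, pow_succ]; ring
  rw [habs, ← hCc]
  exact mul_le_mul_of_nonneg_right hfin (le_of_lt hxpos)

lemma binom_hasSum {x s : ℝ} (hx0 : 0 < x) (hx1 : x < 1)
    (hs0 : 0 < s) (hs1 : s < 1) :
    HasSum (fun j : ℕ => gchoose x j * (-s) ^ j) ((1 - s) ^ x) := by
  have hsum := summable_gchoose hx0 hx1 (le_of_lt hs0) hs1
  have h1 : Filter.Tendsto (fun N : ℕ => ∑ j ∈ range (N + 1), gchoose x j * (-s) ^ j)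
      Filter.atTop (nhds (∑' j, gchoose x j * (-s) ^ j)) :=
    hsum.hasSum.tendsto_sum_nat.comp (Filter.tendsto_add_atTop_nat 1)
  have hz : Filter.Tendsto (fun N : ℕ => (x * (1 - s)⁻¹) * s ^ (N + 1))
      Filter.atTop (nhds 0) := by
    have := (tendsto_pow_atTop_nhds_zero_of_lt_one (le_of_lt hs0) hs1).const_mul
      (x * (1 - s)⁻¹)
    rw [mul_zero] at this
    exact this.comp (Filter.tendsto_add_atTop_nat 1)
  have hd : Filter.Tendsto
      (fun N : ℕ => ∑ j ∈ range (N + 1), gchoose x j * (-s) ^ j - (1 - s) ^ x)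
      Filter.atTop (nhds 0) := by
    apply squeeze_zero_norm _ hz
    intro N
    exact binom_partial_bound hx0 hx1 hs0 hs1 N
  have h2 : Filter.Tendsto (fun N : ℕ => ∑ j ∈ range (N + 1), gchoose x j * (-s) ^ j)
      Filter.atTop (nhds ((1 - s) ^ x)) := by
    have := hd.add_const ((1 - s) ^ x)
    rw [zero_add] at this
    simpa using this
  have heq : (∑' j, gchoose x j * (-s) ^ j) = (1 - s) ^ x := tendsto_nhds_unique h1 h2
  rw [← heq]
  exact hsum.hasSum

lemma binom_shift {x s : ℝ} (hx0 : 0 < x) (hx1 : x < 1)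
    (hs0 : 0 < s) (hs1 : s < 1) :
    HasSum (fun m : ℕ => gchoose x (m + 2) * (-s) ^ (m + 1))
      (((1 - s) ^ x - 1 + x * s) * (-s)⁻¹) := by
  have hsne : (-s : ℝ) ≠ 0 := by intro h; nlinarith [neg_eq_zero.mp h]
  have H1 := binom_hasSum hx0 hx1 hs0 hs1
  have H2 : HasSum (fun m : ℕ => gchoose x (m + 2) * (-s) ^ (m + 2))
      ((1 - s) ^ x - ∑ i ∈ range 2, gchoose x i * (-s) ^ i) := by
    refine (hasSum_nat_add_iff (f := fun j : ℕ => gchoose x j * (-s) ^ j) 2).mpr ?_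
    rw [sub_add_cancel]
    exact H1
  have hsum2 : (∑ i ∈ range 2, gchoose x i * (-s) ^ i) = 1 - x * s := by
    rw [Finset.sum_range_succ, Finset.sum_range_one, gchoose_zero, gchoose_one]
    ring
  rw [hsum2] at H2
  have H3 := H2.mul_right (-s)⁻¹
  have hfun : (fun m : ℕ => gchoose x (m + 2) * (-s) ^ (m + 2) * (-s)⁻¹)
      = fun m : ℕ => gchoose x (m + 2) * (-s) ^ (m + 1) := by
    funext m
    rw [pow_succ (-s) (m + 1)]
    field_simp
  rw [hfun] at H3
  have : (1 - s) ^ x - (1 - x * s) = (1 - s) ^ x - 1 + x * s := by ring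
  rw [this] at H3
  exact H3

lemma swapR (b : ℝ) (n j : ℕ) (hj : 1 ≤ j) :
    ∑ i ∈ range (j + 1), (j.choose i : ℝ) * (-1) ^ (j - i) * (1 - b ^ i) ^ n
      = ∑ k ∈ Finset.Icc 1 n, (n.choose k : ℝ) * ((-1) ^ (j + k) * (1 - b ^ k) ^ j) := by
  have expand : ∀ i : ℕ, (1 - b ^ i) ^ n
      = ∑ k ∈ range (n + 1), (-(b ^ i)) ^ k * (n.choose k : ℝ) := by
    intro i
    have h := add_pow (-(b ^ i)) 1 n
    simp only [one_pow, mul_one] at h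
    rw [← h]; ring_nf
  have expand2 : ∀ k : ℕ, ((b ^ k : ℝ) - 1) ^ j
      = ∑ i ∈ range (j + 1), (b ^ k) ^ i * (-1 : ℝ) ^ (j - i) * (j.choose i : ℝ) := by
    intro k
    have h := add_pow ((b:ℝ) ^ k) (-1) j
    rw [← h]; ring_nf
  calc ∑ i ∈ range (j + 1), (j.choose i : ℝ) * (-1) ^ (j - i) * (1 - b ^ i) ^ n
      = ∑ i ∈ range (j + 1), ∑ k ∈ range (n + 1),
          (j.choose i : ℝ) * (-1) ^ (j - i) * ((-(b ^ i)) ^ k * (n.choose k : ℝ)) := by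
        refine Finset.sum_congr rfl fun i _ => ?_
        rw [expand i, Finset.mul_sum]
    _ = ∑ k ∈ range (n + 1), ∑ i ∈ range (j + 1),
          (j.choose i : ℝ) * (-1) ^ (j - i) * ((-(b ^ i)) ^ k * (n.choose k : ℝ)) :=
        Finset.sum_comm
    _ = ∑ k ∈ range (n + 1), (n.choose k : ℝ) * ((-1) ^ k * ((b ^ k : ℝ) - 1) ^ j) := by
        refine Finset.sum_congr rfl fun k _ => ?_
        rw [expand2 k, Finset.mul_sum, Finset.mul_sum]
        refine Finset.sum_congr rfl fun i _ => ?_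
        have h1 : (-(b ^ i) : ℝ) ^ k = (-1) ^ k * (b ^ i) ^ k := by
          rw [neg_pow]
        have h2 : ((b : ℝ) ^ i) ^ k = (b ^ k) ^ i := by
          rw [← pow_mul, ← pow_mul, mul_comm]
        rw [h1, h2]; ring
    _ = ∑ k ∈ range (n + 1), (n.choose k : ℝ) * ((-1) ^ (j + k) * (1 - b ^ k) ^ j) := by
        refine Finset.sum_congr rfl fun k _ => ?_
        have : ((b : ℝ) ^ k - 1) ^ j = (-1) ^ j * (1 - b ^ k) ^ j := by
          rw [← neg_sub, neg_pow]
        rw [this, pow_add]; ring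
    _ = ∑ k ∈ Finset.Icc 1 n, (n.choose k : ℝ) * ((-1) ^ (j + k) * (1 - b ^ k) ^ j) := by
        have hins : range (n + 1) = insert 0 (Finset.Icc 1 n) := by
          ext m; simp [Finset.mem_range, Finset.mem_Icc]; omega
        rw [hins, Finset.sum_insert (by simp)]
        have hz : ((1 : ℝ) - b ^ 0) ^ j = 0 := by
          rw [pow_zero, sub_self, zero_pow (by omega : j ≠ 0)]
        rw [hz, mul_zero, mul_zero, zero_add]

lemma altsum (n : ℕ) (hn : 1 ≤ n) :
    ∑ k ∈ Finset.Icc 1 n, (n.choose k : ℝ) * (-1) ^ (k + 1) = 1 := by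
  have h := Int.alternating_sum_range_choose_of_ne (by omega : n ≠ 0)
  have hr : ∑ i ∈ range (n + 1), (-1 : ℝ) ^ i * (n.choose i) = 0 := by
    have := congrArg (fun z : ℤ => (z : ℝ)) h
    push_cast at this
    simpa using this
  have hins : range (n + 1) = insert 0 (Finset.Icc 1 n) := by
    ext m; simp [Finset.mem_range, Finset.mem_Icc]; omega
  rw [hins, Finset.sum_insert (by simp)] at hr
  simp only [pow_zero, one_mul, Nat.choose_zero_right, Nat.cast_one] at hr
  have : ∑ k ∈ Finset.Icc 1 n, (n.choose k : ℝ) * (-1) ^ (k + 1)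
      = -∑ k ∈ Finset.Icc 1 n, (-1 : ℝ) ^ k * (n.choose k) := by
    rw [← Finset.sum_neg_distrib]
    refine Finset.sum_congr rfl fun k _ => ?_
    rw [pow_succ]
    ring
  rw [this]
  linarith

theorem alpha_tail_expansion (b x : ℝ) (hb0 : 0 < b) (hb1 : b < 1)
    (hx0 : 0 < x) (hx1 : x < 1) (n : ℕ) (hn : 1 ≤ n) :
    HasSum (fun j : ℕ =>
        gchoose x ((j + 1) + 1) *
          ∑ i ∈ Finset.range ((j + 1) + 1),
            ((j + 1).choose i : ℝ) * (-1) ^ ((j + 1) - i) * (1 - b ^ i) ^ n)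
      (x - ∑ k ∈ Finset.Icc 1 n,
          (n.choose k : ℝ) * (-1) ^ (k + 1) * ((1 - (b ^ (x : ℝ)) ^ k) / (1 - b ^ k))) := by
  have hbk : ∀ k ∈ Finset.Icc 1 n, 0 < b ^ k ∧ b ^ k < 1 := by
    intro k hk
    rw [Finset.mem_Icc] at hk
    exact ⟨pow_pos hb0 k, pow_lt_one₀ (le_of_lt hb0) hb1 (by omega)⟩
  have hFk : ∀ k ∈ Finset.Icc 1 n,
      HasSum (fun m : ℕ => (n.choose k : ℝ) * (-1) ^ (k + 1) *
          (gchoose x (m + 2) * (-(1 - b ^ k)) ^ (m + 1)))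
        ((n.choose k : ℝ) * (-1) ^ (k + 1) *
          ((((b ^ k : ℝ)) ^ (x : ℝ) - 1 + x * (1 - b ^ k)) * (-(1 - b ^ k))⁻¹)) := by
    intro k hk
    obtain ⟨hbk0, hbk1⟩ := hbk k hk
    have hs0 : (0:ℝ) < 1 - b ^ k := by linarith
    have hs1 : 1 - b ^ k < 1 := by linarith
    have H := (binom_shift hx0 hx1 hs0 hs1).mul_left ((n.choose k : ℝ) * (-1) ^ (k + 1))
    rw [show (1 : ℝ) - (1 - b ^ k) = b ^ k by ring] at H
    exact H
  have Hsum := hasSum_sum hFk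
  have Hneg := Hsum.neg
  have hfun2 : (fun m : ℕ => -∑ k ∈ Finset.Icc 1 n,
        (n.choose k : ℝ) * (-1) ^ (k + 1) *
          (gchoose x (m + 2) * (-(1 - b ^ k)) ^ (m + 1)))
      = fun j : ℕ =>
        gchoose x ((j + 1) + 1) *
          ∑ i ∈ Finset.range ((j + 1) + 1),
            ((j + 1).choose i : ℝ) * (-1) ^ ((j + 1) - i) * (1 - b ^ i) ^ n := by
    funext j
    rw [swapR b n (j + 1) (by omega), Finset.mul_sum, ← Finset.sum_neg_distrib]
    refine Finset.sum_congr rfl fun k _ => ?_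
    have e1 : (-(1 - b ^ k) : ℝ) ^ (j + 1) = (-1) ^ (j + 1) * (1 - b ^ k) ^ (j + 1) := by
      rw [neg_pow]
    rw [e1, pow_add, pow_add, pow_add]
    ring
  rw [hfun2] at Hneg
  have hval2 : -∑ k ∈ Finset.Icc 1 n,
        (n.choose k : ℝ) * (-1) ^ (k + 1) *
          ((((b ^ k : ℝ)) ^ (x : ℝ) - 1 + x * (1 - b ^ k)) * (-(1 - b ^ k))⁻¹)
      = x - ∑ k ∈ Finset.Icc 1 n,
          (n.choose k : ℝ) * (-1) ^ (k + 1) * ((1 - (b ^ (x : ℝ)) ^ k) / (1 - b ^ k)) := by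
    have step : ∀ k ∈ Finset.Icc 1 n,
        -((n.choose k : ℝ) * (-1) ^ (k + 1) *
          ((((b ^ k : ℝ)) ^ (x : ℝ) - 1 + x * (1 - b ^ k)) * (-(1 - b ^ k))⁻¹))
        = (n.choose k : ℝ) * (-1) ^ (k + 1) * x
          - (n.choose k : ℝ) * (-1) ^ (k + 1) * ((1 - (b ^ (x : ℝ)) ^ k) / (1 - b ^ k)) := by
      intro k hk
      obtain ⟨hbk0, hbk1⟩ := hbk k hk
      have hsne : (1 - b ^ k : ℝ) ≠ 0 := by intro h; nlinarith
      have hpow : ((b : ℝ) ^ (x : ℝ)) ^ k = ((b ^ k : ℝ)) ^ (x : ℝ) := by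
        rw [← Real.rpow_natCast (b ^ (x : ℝ)) k, ← Real.rpow_natCast b k,
          ← Real.rpow_mul (le_of_lt hb0), ← Real.rpow_mul (le_of_lt hb0), mul_comm]
      rw [hpow, inv_neg]
      have hval : ((b ^ k : ℝ)) ^ (x : ℝ) - 1 + x * (1 - b ^ k)
          = x * (1 - b ^ k) - (1 - ((b ^ k : ℝ)) ^ (x : ℝ)) := by ring
      rw [hval, mul_comm (x * (1 - b ^ k) - (1 - ((b ^ k : ℝ)) ^ (x : ℝ))) (-(1 - b ^ k)⁻¹),
        mul_sub, neg_mul, neg_mul, ← div_eq_inv_mul, ← div_eq_inv_mul,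
        mul_div_cancel_right₀ x hsne]
      ring
    rw [← Finset.sum_neg_distrib, Finset.sum_congr rfl step, Finset.sum_sub_distrib,
      ← Finset.sum_mul, altsum n hn]
    ring
  rw [hval2] at Hneg
  exact Hneg
end
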